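/- Let g_t : R^m_+ → R be continuous and strictly increasing with g_t(β_t) = 0 for each t. If scalars u_t and λ_t > 0 satisfy u_s - u_t - λ_t g_t(β_s) ≤ 0 for all s,t, then U(β) = min_t {u_t + λ_t g_t(β)} is a continuous monotone increasing function satisfying U(β_t) = u_t and U(β) ≤ u_t for all β with g_t(β) ≤ 0; hence β_t maximizes U over the nonlinear budget set B_t = {β : g_t(β) ≤ 0}. -/
import Mathlib

open Matrix

/-- Forges–Minelli, nonlinear budgets: if `u_t, λ_t > 0` satisfy
`u_s - u_t - λ_t g_t(β_s) ≤ 0` for all `s,t`, with `g_t` continuous, strictly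
increasing and `g_t(β_t) = 0`, then `U(β) = min_t (u_t + λ_t g_t(β))` is
continuous, monotone, satisfies `U(β_t) = u_t`, `U(β) ≤ u_t` on the budget set
`{g_t ≤ 0}`, and hence `β_t` maximizes `U` over that budget set. -/
theorem nonlinear_afriat_construction {m N : ℕ} (hN : 0 < N)
    (β : Fin N → Fin m → ℝ)
    (g : Fin N → (Fin m → ℝ) → ℝ)
    (hgc : ∀ t, Continuous (g t)) (hgm : ∀ t, StrictMono (g t))
    (hg0 : ∀ t, g t (β t) = 0)
    (us ls : Fin N → ℝ) (hls : ∀ t, 0 < ls t)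
    (hAfriat : ∀ s t, us s - us t - ls t * g t (β s) ≤ 0)
    (U : (Fin m → ℝ) → ℝ)
    (hU : ∀ b, U b = Finset.univ.inf' ⟨⟨0, hN⟩, Finset.mem_univ _⟩
      (fun t => us t + ls t * g t b)) :
    Continuous U ∧ Monotone U ∧ (∀ t, U (β t) = us t) ∧
      (∀ t b, g t b ≤ 0 → U b ≤ us t) ∧
      (∀ t b, g t b ≤ 0 → U b ≤ U (β t)) := by
  have hUle : ∀ t b, U b ≤ us t + ls t * g t b := by
    intro t b
    rw [hU b]
    exact Finset.inf'_le _ (Finset.mem_univ t)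
  have hUeq : ∀ t, U (β t) = us t := by
    intro t
    apply le_antisymm
    · have := hUle t (β t); rw [hg0 t] at this; linarith
    · rw [hU]
      apply Finset.le_inf'
      intro s _
      have := hAfriat t s
      linarith
  have hbudget : ∀ t b, g t b ≤ 0 → U b ≤ us t := by
    intro t b hb
    have := hUle t b
    nlinarith [hls t]
  refine ⟨?_, ?_, hUeq, hbudget, fun t b hb => (hUeq t).symm ▸ hbudget t b hb⟩
  · have : U = fun b => Finset.univ.inf' ⟨⟨0, hN⟩, Finset.mem_univ _⟩
        (fun t => us t + ls t * g t b) := funext hU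
    rw [this]
    exact Continuous.finset_inf'_apply _ fun t _ =>
      continuous_const.add (continuous_const.mul (hgc t))
  · intro a b hab
    rw [hU a, hU b]
    apply Finset.le_inf'
    intro t _
    calc Finset.univ.inf' ⟨⟨0, hN⟩, Finset.mem_univ _⟩ (fun s => us s + ls s * g s a)
        ≤ us t + ls t * g t a := Finset.inf'_le _ (Finset.mem_univ t)
      _ ≤ us t + ls t * g t b := by
          have := (hgm t).monotone hab
          nlinarith [hls t]
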